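/- For every odd positive integer n, the number of permutations in S_n with all cycles of odd length equals n times the number of permutations in S_{n-1} with all cycles of even length. -/
import Mathlib
set_option linter.unusedSectionVars false

open Equiv Function Equiv.Perm

namespace CardOdd

variable {α : Type*} {β : Type*}

lemma isPeriodicPt_iff_pow (f : Perm α) (n : ℕ) (x : α) :
    IsPeriodicPt f n x ↔ (f ^ n) x = x := Iff.rfl

lemma mem_periodicPts_perm [Finite α] (f : Perm α) (x : α) : x ∈ periodicPts f := by
  refine ⟨orderOf f, orderOf_pos f, ?_⟩
  rw [isPeriodicPt_iff_pow, pow_orderOf_eq_one]; rfl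

lemma minimalPeriod_pos [Finite α] (f : Perm α) (x : α) : 0 < minimalPeriod f x :=
  minimalPeriod_pos_of_mem_periodicPts (mem_periodicPts_perm f x)

lemma pow_minimalPeriod_apply [Finite α] (f : Perm α) (x : α) :
    (f ^ minimalPeriod f x) x = x := by
  have := isPeriodicPt_minimalPeriod f x
  rwa [isPeriodicPt_iff_pow] at this

lemma pow_apply_ne_self_of_lt [Finite α] (f : Perm α) (x : α) {n : ℕ} (h0 : n ≠ 0)
    (h : n < minimalPeriod f x) : (f ^ n) x ≠ x := by
  intro hc
  exact not_isPeriodicPt_of_pos_of_lt_minimalPeriod h0 h ((isPeriodicPt_iff_pow f n x).2 hc)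

/-- If two permutations have pointwise-matching return times at `x`, `y`, their minimal periods
agree. -/
lemma minimalPeriod_eq_of_iff [Finite α] [Finite β] {f : Perm α} {g : Perm β} {x : α} {y : β}
    (h : ∀ n : ℕ, (f ^ n) x = x ↔ (g ^ n) y = y) :
    minimalPeriod f x = minimalPeriod g y := by
  apply le_antisymm
  · exact IsPeriodicPt.minimalPeriod_le (minimalPeriod_pos g y)
      (((isPeriodicPt_iff_pow f _ x).2 ((h _).mpr (pow_minimalPeriod_apply g y))))
  · exact IsPeriodicPt.minimalPeriod_le (minimalPeriod_pos f x)
      (((isPeriodicPt_iff_pow g _ y).2 ((h _).mp (pow_minimalPeriod_apply f x))))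

lemma minimalPeriod_pow_apply [Finite α] (f : Perm α) (x : α) (n : ℕ) :
    minimalPeriod f ((f ^ n) x) = minimalPeriod f x := by
  refine minimalPeriod_eq_of_iff fun m => ?_
  have key : (f ^ m) ((f ^ n) x) = (f ^ n) ((f ^ m) x) := by
    rw [← Equiv.Perm.mul_apply, ← Equiv.Perm.mul_apply, pow_mul_comm]
  constructor
  · intro h
    rw [key] at h
    exact (f ^ n).injective h
  · intro h
    rw [key, h]

lemma sameCycle_iff_exists_pow [Finite α] {f : Perm α} {x y : α} :
    f.SameCycle x y ↔ ∃ n : ℕ, (f ^ n) x = y := by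
  constructor
  · intro h
    obtain ⟨i, _, hi⟩ := h.exists_pow_eq'
    exact ⟨i, hi⟩
  · rintro ⟨n, rfl⟩
    exact ⟨(n : ℤ), by simp⟩

lemma SameCycle.minimalPeriod_eq [Finite α] {f : Perm α} {x y : α} (h : f.SameCycle x y) :
    minimalPeriod f x = minimalPeriod f y := by
  obtain ⟨n, rfl⟩ := sameCycle_iff_exists_pow.1 h
  exact (minimalPeriod_pow_apply f x n).symm

lemma permCongr_pow_apply (e : α ≃ β) (f : Perm α) (n : ℕ) (x : α) :
    ((e.permCongr f) ^ n) (e x) = e ((f ^ n) x) := by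
  induction n generalizing x with
  | zero => simp
  | succ n ih =>
    rw [pow_succ', pow_succ', Equiv.Perm.mul_apply, Equiv.Perm.mul_apply,
      Equiv.permCongr_apply, ih, Equiv.symm_apply_apply]

lemma minimalPeriod_permCongr [Finite α] [Finite β] (e : α ≃ β) (f : Perm α) (x : α) :
    minimalPeriod (e.permCongr f) (e x) = minimalPeriod f x := by
  refine minimalPeriod_eq_of_iff fun n => ?_
  rw [permCongr_pow_apply]
  exact ⟨fun h => by simpa using e.injective h, fun h => by rw [h]⟩

lemma sameCycle_permCongr [Finite α] [Finite β] (e : α ≃ β) (f : Perm α) (x y : α) :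
    (e.permCongr f).SameCycle (e x) (e y) ↔ f.SameCycle x y := by
  rw [sameCycle_iff_exists_pow, sameCycle_iff_exists_pow]
  constructor
  · rintro ⟨n, hn⟩
    exact ⟨n, e.injective (by rwa [← permCongr_pow_apply])⟩
  · rintro ⟨n, rfl⟩
    exact ⟨n, by rw [permCongr_pow_apply]⟩


section Splice

variable {α : Type*} [DecidableEq α] [Fintype α] (σ : Perm (Option α))

/-- The permutation with `none` spliced out of its cycle, still acting on `Option α`. -/
local notation "τ" => Equiv.swap (none : Option α) (σ none) * σ

lemma tau_none : (τ) none = none := by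
  simp [Equiv.Perm.mul_apply, Equiv.swap_apply_right]

lemma some_removeNone_apply (y : α) :
    (some (Equiv.removeNone σ y) : Option α) = (τ) (some y) := by
  rw [← map_equiv_removeNone]
  simp only [Equiv.optionCongr_apply, Option.map_some]

lemma some_removeNone_pow (n : ℕ) (y : α) :
    (some ((Equiv.removeNone σ ^ n) y) : Option α) = ((τ) ^ n) (some y) := by
  induction n generalizing y with
  | zero => simp
  | succ n ih =>
    rw [pow_succ', pow_succ', Equiv.Perm.mul_apply, Equiv.Perm.mul_apply,
      some_removeNone_apply, ih]

lemma minimalPeriod_removeNone (y : α) :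
    minimalPeriod (Equiv.removeNone σ) y = minimalPeriod (τ) (some y) := by
  refine minimalPeriod_eq_of_iff fun n => ?_
  constructor
  · intro h
    rw [← some_removeNone_pow, h]
  · intro h
    have := (some_removeNone_pow σ n y).trans h
    exact Option.some_injective _ this

lemma sameCycle_removeNone (y z : α) :
    Equiv.Perm.SameCycle (Equiv.removeNone σ) y z ↔ (τ).SameCycle (some y) (some z) := by
  rw [sameCycle_iff_exists_pow, sameCycle_iff_exists_pow]
  constructor
  · rintro ⟨n, rfl⟩
    exact ⟨n, (some_removeNone_pow σ n y).symm⟩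
  · rintro ⟨n, hn⟩
    refine ⟨n, Option.some_injective _ ?_⟩
    rw [some_removeNone_pow, hn]

lemma tau_eq_of_fix (h : σ none = none) : (τ) = σ := by
  rw [h, Equiv.swap_self]
  ext x; simp

section Moved

variable {σ}

lemma two_le_l (h : σ none ≠ none) : 2 ≤ minimalPeriod σ none := by
  have h1 : minimalPeriod σ none ≠ 1 := fun hc =>
    h (minimalPeriod_eq_one_iff_isFixedPt.1 hc)
  have h0 : 0 < minimalPeriod σ none := minimalPeriod_pos σ none
  omega

lemma pow_none_ne_none {j : ℕ} (hj0 : j ≠ 0) (hjl : j < minimalPeriod σ none) :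
    (σ ^ j) none ≠ none :=
  pow_apply_ne_self_of_lt σ none hj0 hjl

lemma sameCycle_of_pow_eq_none {x : Option α} {n : ℕ} (hx : (σ ^ n) x = none) :
    σ.SameCycle none x :=
  (Equiv.Perm.SameCycle.symm ⟨(n : ℤ), by simpa using hx⟩)

/-- Off the cycle of `none`, `τ` agrees with `σ` on all powers. -/
lemma tau_pow_eq_of_not_sameCycle {x : Option α} (hx : ¬σ.SameCycle none x) (n : ℕ) :
    ((τ) ^ n) x = (σ ^ n) x := by
  induction n with
  | zero => rfl
  | succ n ih =>
    rw [pow_succ', Equiv.Perm.mul_apply, ih, pow_succ', Equiv.Perm.mul_apply,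
      Equiv.Perm.mul_apply]
    have h1 : σ ((σ ^ n) x) ≠ none := by
      intro hc
      refine hx (sameCycle_of_pow_eq_none (n := n + 1) ?_)
      rw [pow_succ', Equiv.Perm.mul_apply]; exact hc
    have h2 : σ ((σ ^ n) x) ≠ σ none := by
      intro hc
      exact hx (sameCycle_of_pow_eq_none (σ.injective hc))
    rw [Equiv.swap_apply_of_ne_of_ne h1 h2]

lemma tau_minimalPeriod_of_not_sameCycle {x : Option α} (hx : ¬σ.SameCycle none x) :
    minimalPeriod (τ) x = minimalPeriod σ x := by
  refine minimalPeriod_eq_of_iff fun n => ?_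
  rw [tau_pow_eq_of_not_sameCycle hx]

lemma tau_pow_on_cycle (h : σ none ≠ none) {m : ℕ} (hm : m ≤ minimalPeriod σ none - 2) :
    ((τ) ^ m) (σ none) = (σ ^ (m + 1)) none := by
  have hl := two_le_l h
  induction m with
  | zero => simp
  | succ m ih =>
    have hm' : m ≤ minimalPeriod σ none - 2 := by omega
    rw [pow_succ', Equiv.Perm.mul_apply, ih hm', Equiv.Perm.mul_apply]
    have key : σ ((σ ^ (m + 1)) none) = (σ ^ (m + 2)) none := by
      rw [← Equiv.Perm.mul_apply, ← pow_succ']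
    have h1 : σ ((σ ^ (m + 1)) none) ≠ none := by
      rw [key]; exact pow_none_ne_none (by omega) (by omega)
    have h2 : σ ((σ ^ (m + 1)) none) ≠ σ none := by
      intro hc
      exact pow_none_ne_none (by omega : m + 1 ≠ 0) (by omega) (σ.injective hc)
    rw [Equiv.swap_apply_of_ne_of_ne h1 h2, key]

lemma tau_pow_l_sub_one (h : σ none ≠ none) : ((τ) ^ (minimalPeriod σ none - 1)) (σ none) = σ none := by
  have hl := two_le_l h
  have hstep : minimalPeriod σ none - 1 = (minimalPeriod σ none - 2) + 1 := by omega
  rw [hstep, pow_succ', Equiv.Perm.mul_apply, tau_pow_on_cycle h le_rfl,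
    Equiv.Perm.mul_apply]
  have key : σ ((σ ^ (minimalPeriod σ none - 2 + 1)) none) = (σ ^ minimalPeriod σ none) none := by
    have hll : minimalPeriod ⇑σ none - 2 + 1 + 1 = minimalPeriod ⇑σ none := by omega
    rw [← Equiv.Perm.mul_apply, ← pow_succ', hll]
  rw [key, pow_minimalPeriod_apply, Equiv.swap_apply_left]

lemma tau_minimalPeriod_b (h : σ none ≠ none) : minimalPeriod (τ) (σ none) = minimalPeriod σ none - 1 := by
  have hl := two_le_l h
  have hle : minimalPeriod (τ) (σ none) ≤ minimalPeriod σ none - 1 :=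
    IsPeriodicPt.minimalPeriod_le (by omega)
      ((isPeriodicPt_iff_pow _ _ _).2 (tau_pow_l_sub_one h))
  have hpos : 0 < minimalPeriod (τ) (σ none) := minimalPeriod_pos _ _
  rcases lt_or_eq_of_le hle with hlt | heq
  · exfalso
    set p := minimalPeriod (τ) (σ none) with hp
    have hfix : ((τ) ^ p) (σ none) = σ none := pow_minimalPeriod_apply _ _
    rw [tau_pow_on_cycle h (by omega)] at hfix
    have : (σ ^ p) none = none := σ.injective (by
      rw [← hfix, pow_succ', Equiv.Perm.mul_apply])
    exact pow_none_ne_none (by omega) (by omega) this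
  · exact heq

lemma pow_mod_minimalPeriod (f : Perm (Option α)) (x : Option α) (n : ℕ) :
    (f ^ (n % minimalPeriod f x)) x = (f ^ n) x :=
  iterate_mod_minimalPeriod_eq

lemma tau_sameCycle_b_iff (h : σ none ≠ none) {z : Option α} :
    (τ).SameCycle (σ none) z ↔ σ.SameCycle none z ∧ z ≠ none := by
  have hl := two_le_l h
  constructor
  · intro hsc
    obtain ⟨n, rfl⟩ := sameCycle_iff_exists_pow.1 hsc
    have hmod := pow_mod_minimalPeriod (τ) (σ none) n
    rw [tau_minimalPeriod_b h] at hmod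
    set k := n % (minimalPeriod σ none - 1) with hk
    have hklt : k < minimalPeriod σ none - 1 := Nat.mod_lt _ (by omega)
    rw [← hmod, tau_pow_on_cycle h (by omega)]
    constructor
    · exact sameCycle_iff_exists_pow.2 ⟨k + 1, rfl⟩
    · exact pow_none_ne_none (by omega) (by omega)
  · rintro ⟨hsc, hz⟩
    obtain ⟨n, rfl⟩ := sameCycle_iff_exists_pow.1 hsc
    have hmod := pow_mod_minimalPeriod σ none n
    set k := n % minimalPeriod σ none with hk
    have hklt : k < minimalPeriod σ none := Nat.mod_lt _ (by omega)
    have hk0 : k ≠ 0 := by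
      intro hc
      rw [← hmod, hc] at hz
      simp at hz
    rw [← hmod]
    refine sameCycle_iff_exists_pow.2 ⟨k - 1, ?_⟩
    rw [tau_pow_on_cycle h (by omega)]
    have hk1 : k - 1 + 1 = k := by omega
    rw [hk1]

lemma tau_minimalPeriod_of_sameCycle (h : σ none ≠ none) {x : Option α} (hx : σ.SameCycle none x)
    (hxn : x ≠ none) : minimalPeriod (τ) x = minimalPeriod σ none - 1 := by
  have hsc : (τ).SameCycle (σ none) x := (tau_sameCycle_b_iff h).2 ⟨hx, hxn⟩
  rw [← SameCycle.minimalPeriod_eq hsc, tau_minimalPeriod_b h]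

end Moved

end Splice

section Predicates

variable {β : Type*} {γ : Type*}

/-- Every cycle of `f` (including fixed points, of length 1) has odd length. -/
def AllOdd (f : Perm β) : Prop := ∀ x, Odd (minimalPeriod f x)

/-- Every cycle of `f` (including fixed points) has even length; in particular `f` has no
fixed points. -/
def AllEven (f : Perm β) : Prop := ∀ x, Even (minimalPeriod f x)

/-- The cycle through the marked point `b` is even, all other cycles are odd. -/
def MarkOdd (b : β) (f : Perm β) : Prop :=
  Even (minimalPeriod f b) ∧ ∀ y, ¬f.SameCycle b y → Odd (minimalPeriod f y)

/-- The cycle through the marked point `b` is odd, all other cycles are even. -/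
def MarkEven (b : β) (f : Perm β) : Prop :=
  Odd (minimalPeriod f b) ∧ ∀ y, ¬f.SameCycle b y → Even (minimalPeriod f y)

variable [Finite β] [Finite γ]

lemma allOdd_permCongr (e : β ≃ γ) (f : Perm β) : AllOdd (e.permCongr f) ↔ AllOdd f := by
  constructor
  · intro h y
    have := h (e y)
    rwa [minimalPeriod_permCongr] at this
  · intro h x
    have := h (e.symm x)
    rw [← minimalPeriod_permCongr e] at this
    rwa [Equiv.apply_symm_apply] at this

lemma allEven_permCongr (e : β ≃ γ) (f : Perm β) : AllEven (e.permCongr f) ↔ AllEven f := by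
  constructor
  · intro h y
    have := h (e y)
    rwa [minimalPeriod_permCongr] at this
  · intro h x
    have := h (e.symm x)
    rw [← minimalPeriod_permCongr e] at this
    rwa [Equiv.apply_symm_apply] at this

lemma markOdd_permCongr (e : β ≃ γ) (b : β) (f : Perm β) :
    MarkOdd (e b) (e.permCongr f) ↔ MarkOdd b f := by
  unfold MarkOdd
  rw [minimalPeriod_permCongr]
  refine and_congr Iff.rfl ?_
  constructor
  · intro h y hy
    have := h (e y) (by rwa [sameCycle_permCongr])
    rwa [minimalPeriod_permCongr] at this
  · intro h x hx
    have hx' : ¬f.SameCycle b (e.symm x) := by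
      rw [← sameCycle_permCongr e]
      rwa [Equiv.apply_symm_apply]
    have := h _ hx'
    rw [← minimalPeriod_permCongr e] at this
    rwa [Equiv.apply_symm_apply] at this

lemma markEven_permCongr (e : β ≃ γ) (b : β) (f : Perm β) :
    MarkEven (e b) (e.permCongr f) ↔ MarkEven b f := by
  unfold MarkEven
  rw [minimalPeriod_permCongr]
  refine and_congr Iff.rfl ?_
  constructor
  · intro h y hy
    have := h (e y) (by rwa [sameCycle_permCongr])
    rwa [minimalPeriod_permCongr] at this
  · intro h x hx
    have hx' : ¬f.SameCycle b (e.symm x) := by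
      rw [← sameCycle_permCongr e]
      rwa [Equiv.apply_symm_apply]
    have := h _ hx'
    rw [← minimalPeriod_permCongr e] at this
    rwa [Equiv.apply_symm_apply] at this

end Predicates

section Translate

variable {α : Type*} [DecidableEq α] [Fintype α] {σ : Perm (Option α)}

lemma sameCycle_none_of_fix (h : σ none = none) {z : Option α} (hz : σ.SameCycle none z) :
    z = none := by
  obtain ⟨i, hi⟩ := hz
  rw [zpow_apply_eq_self_of_apply_eq_self h] at hi
  exact hi.symm

lemma sc_none_some_b (hb : σ none = some b₀) : σ.SameCycle none (some b₀) :=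
  ⟨1, by rw [zpow_one, hb]⟩

lemma per_rm_fix (h : σ none = none) (y : α) :
    minimalPeriod (Equiv.removeNone σ) y = minimalPeriod σ (some y) := by
  rw [minimalPeriod_removeNone, tau_eq_of_fix σ h]

lemma sc_rm_fix (h : σ none = none) (y z : α) :
    Equiv.Perm.SameCycle (Equiv.removeNone σ) y z ↔ σ.SameCycle (some y) (some z) := by
  rw [sameCycle_removeNone, tau_eq_of_fix σ h]

lemma per_rm_not {b₀ : α} (hb : σ none = some b₀) {y : α}
    (hy : ¬σ.SameCycle none (some y)) :
    minimalPeriod (Equiv.removeNone σ) y = minimalPeriod σ (some y) := by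
  rw [minimalPeriod_removeNone]
  exact tau_minimalPeriod_of_not_sameCycle hy

lemma per_rm_in {b₀ : α} (hb : σ none = some b₀) {y : α}
    (hy : σ.SameCycle none (some y)) :
    minimalPeriod (Equiv.removeNone σ) y = minimalPeriod σ none - 1 := by
  rw [minimalPeriod_removeNone]
  exact tau_minimalPeriod_of_sameCycle (by simp [hb]) hy (by simp)

lemma sc_rm_b {b₀ : α} (hb : σ none = some b₀) (y : α) :
    Equiv.Perm.SameCycle (Equiv.removeNone σ) b₀ y ↔ σ.SameCycle none (some y) := by
  rw [sameCycle_removeNone]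
  have h : σ none ≠ none := by simp [hb]
  have := tau_sameCycle_b_iff h (z := (some y : Option α))
  rw [hb] at this
  rw [hb, this]
  simp

lemma per_none_eq_rm_b_add_one {b₀ : α} (hb : σ none = some b₀) :
    minimalPeriod σ none = minimalPeriod (Equiv.removeNone σ) b₀ + 1 := by
  have h : σ none ≠ none := by simp [hb]
  have hl := two_le_l h
  rw [per_rm_in hb (sc_none_some_b hb)]
  omega

lemma T1a (h : σ none = none) : AllOdd σ ↔ AllOdd (Equiv.removeNone σ) := by
  constructor
  · intro ha y
    rw [per_rm_fix h]
    exact ha (some y)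
  · intro ha x
    cases x with
    | none =>
      rw [minimalPeriod_eq_one_iff_isFixedPt.2 h]
      exact odd_one
    | some y =>
      rw [← per_rm_fix h]
      exact ha y

lemma T1b {b₀ : α} (hb : σ none = some b₀) :
    AllOdd σ ↔ MarkOdd b₀ (Equiv.removeNone σ) := by
  have h : σ none ≠ none := by simp [hb]
  have hl := two_le_l h
  constructor
  · intro ha
    constructor
    · rw [per_rm_in hb (sc_none_some_b hb)]
      exact Nat.Odd.sub_odd (ha none) odd_one
    · intro y hy
      rw [sc_rm_b hb] at hy
      rw [per_rm_not hb hy]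
      exact ha (some y)
  · rintro ⟨hmb, hmo⟩ x
    cases x with
    | none =>
      rw [per_none_eq_rm_b_add_one hb]
      exact Even.add_one hmb
    | some y =>
      by_cases hsc : σ.SameCycle none (some y)
      · rw [← SameCycle.minimalPeriod_eq hsc, per_none_eq_rm_b_add_one hb]
        exact Even.add_one hmb
      · rw [← per_rm_not hb hsc]
        exact hmo y (fun hc => hsc ((sc_rm_b hb y).1 hc))

lemma T2_none (h : σ none = none) : ¬MarkOdd (none : Option α) σ := by
  rintro ⟨he, -⟩
  rw [minimalPeriod_eq_one_iff_isFixedPt.2 h] at he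
  exact (Nat.not_even_iff_odd.2 odd_one) he

lemma T2 {b₀ : α} (hb : σ none = some b₀) :
    MarkOdd (none : Option α) σ ↔ AllOdd (Equiv.removeNone σ) := by
  have h : σ none ≠ none := by simp [hb]
  have hl := two_le_l h
  constructor
  · rintro ⟨he, ho⟩ y
    by_cases hsc : σ.SameCycle none (some y)
    · rw [per_rm_in hb hsc]
      exact Nat.Even.sub_odd (by omega) he odd_one
    · rw [per_rm_not hb hsc]
      exact ho (some y) hsc
  · intro ha
    constructor
    · rw [per_none_eq_rm_b_add_one hb]
      exact Odd.add_one (ha b₀)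
    · intro z hz
      cases z with
      | none => exact absurd (Equiv.Perm.SameCycle.refl σ none) hz
      | some y =>
        rw [← per_rm_not hb hz]
        exact ha y

lemma T3_none (h : σ none = none) : ¬AllEven σ := by
  intro ha
  have := ha none
  rw [minimalPeriod_eq_one_iff_isFixedPt.2 h] at this
  exact (Nat.not_even_iff_odd.2 odd_one) this

lemma T3 {b₀ : α} (hb : σ none = some b₀) :
    AllEven σ ↔ MarkEven b₀ (Equiv.removeNone σ) := by
  have h : σ none ≠ none := by simp [hb]
  have hl := two_le_l h
  constructor
  · intro ha
    constructor
    · rw [per_rm_in hb (sc_none_some_b hb)]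
      exact Nat.Even.sub_odd (by omega) (ha none) odd_one
    · intro y hy
      rw [sc_rm_b hb] at hy
      rw [per_rm_not hb hy]
      exact ha (some y)
  · rintro ⟨hmb, hme⟩ x
    cases x with
    | none =>
      rw [per_none_eq_rm_b_add_one hb]
      exact Odd.add_one hmb
    | some y =>
      by_cases hsc : σ.SameCycle none (some y)
      · rw [← SameCycle.minimalPeriod_eq hsc, per_none_eq_rm_b_add_one hb]
        exact Odd.add_one hmb
      · rw [← per_rm_not hb hsc]
        exact hme y (fun hc => hsc ((sc_rm_b hb y).1 hc))

lemma T4a (h : σ none = none) :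
    MarkEven (none : Option α) σ ↔ AllEven (Equiv.removeNone σ) := by
  constructor
  · rintro ⟨-, hme⟩ y
    have hy : ¬σ.SameCycle none (some y) := fun hc => by
      simpa using sameCycle_none_of_fix h hc
    rw [per_rm_fix h]
    exact hme (some y) hy
  · intro ha
    constructor
    · rw [minimalPeriod_eq_one_iff_isFixedPt.2 h]
      exact odd_one
    · intro z hz
      cases z with
      | none => exact absurd (Equiv.Perm.SameCycle.refl σ none) hz
      | some y =>
        rw [← per_rm_fix h]
        exact ha y

lemma T4b {b₀ : α} (hb : σ none = some b₀) :
    MarkEven (none : Option α) σ ↔ AllEven (Equiv.removeNone σ) := by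
  have h : σ none ≠ none := by simp [hb]
  have hl := two_le_l h
  constructor
  · rintro ⟨ho, hme⟩ y
    by_cases hsc : σ.SameCycle none (some y)
    · rw [per_rm_in hb hsc]
      exact Nat.Odd.sub_odd ho odd_one
    · rw [per_rm_not hb hsc]
      exact hme (some y) hsc
  · intro ha
    constructor
    · rw [per_none_eq_rm_b_add_one hb]
      exact Even.add_one (ha b₀)
    · intro z hz
      cases z with
      | none => exact absurd (Equiv.Perm.SameCycle.refl σ none) hz
      | some y =>
        rw [← per_rm_not hb hz]
        exact ha y

end Translate

section Counting

/-- Split a subtype of `Option α × γ` according to the first component. -/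
def optionProdSplit {α γ : Type*} (Q : Option α × γ → Prop) :
    {p : Option α × γ // Q p} ≃ {c : γ // Q (none, c)} ⊕ {p : α × γ // Q (some p.1, p.2)} where
  toFun p := match p with
    | ⟨(none, c), hq⟩ => Sum.inl ⟨c, hq⟩
    | ⟨(some a, c), hq⟩ => Sum.inr ⟨(a, c), hq⟩
  invFun s := match s with
    | Sum.inl ⟨c, h⟩ => ⟨(none, c), h⟩
    | Sum.inr ⟨⟨a, c⟩, h⟩ => ⟨(some a, c), h⟩
  left_inv p := by rcases p with ⟨⟨b | a, c⟩, hq⟩ <;> rfl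
  right_inv s := by rcases s with ⟨c, h⟩ | ⟨⟨a, c⟩, h⟩ <;> rfl

lemma card_optionProd {α γ : Type*} [Finite α] [Finite γ] (Q : Option α × γ → Prop) :
    Nat.card {p : Option α × γ // Q p}
      = Nat.card {c : γ // Q (none, c)} + Nat.card {p : α × γ // Q (some p.1, p.2)} := by
  rw [Nat.card_congr (optionProdSplit Q), Nat.card_sum]

lemma card_pairs_snd {α γ : Type*} [Fintype α] [Finite γ] (R : γ → Prop) :
    Nat.card {p : α × γ // R p.2} = Fintype.card α * Nat.card {c : γ // R c} := by
  rw [Nat.card_congr ((Equiv.subtypeProdEquivSigmaSubtype fun (_ : α) (c : γ) => R c).trans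
    (Equiv.sigmaEquivProd α _)), Nat.card_prod, Nat.card_eq_fintype_card]

lemma card_marked_pairs {β : Type*} [Fintype β] [DecidableEq β] (P : β → Perm β → Prop)
    (hP : ∀ (e : β ≃ β) (b : β) (f : Perm β), P b f ↔ P (e b) (e.permCongr f)) (b₀ : β) :
    Nat.card {p : β × Perm β // P p.1 p.2}
      = Fintype.card β * Nat.card {f : Perm β // P b₀ f} := by
  have e2 : ∀ b : β, {f : Perm β // P b f} ≃ {f : Perm β // P b₀ f} := fun b =>
    Equiv.subtypeEquiv (Equiv.permCongr (Equiv.swap b b₀)) fun f => by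
      have := hP (Equiv.swap b b₀) b f
      rwa [Equiv.swap_apply_left] at this
  rw [Nat.card_congr (((Equiv.subtypeProdEquivSigmaSubtype P).trans
    ((Equiv.sigmaCongrRight e2).trans (Equiv.sigmaEquivProd β _)))), Nat.card_prod,
    Nat.card_eq_fintype_card]

variable {α : Type*} [DecidableEq α] [Fintype α]

lemma markOdd_conj (e : α ≃ α) (b : α) (f : Perm α) :
    MarkOdd b f ↔ MarkOdd (e b) (e.permCongr f) := (markOdd_permCongr e b f).symm

lemma markEven_conj (e : α ≃ α) (b : α) (f : Perm α) :
    MarkEven b f ↔ MarkEven (e b) (e.permCongr f) := (markEven_permCongr e b f).symm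

lemma step_A :
    Nat.card {σ : Perm (Option α) // AllOdd σ}
      = Nat.card {f : Perm α // AllOdd f}
        + Nat.card {p : α × Perm α // MarkOdd p.1 p.2} := by
  have key : ∀ σ : Perm (Option α), AllOdd σ ↔
      (fun p : Option α × Perm α =>
        Option.rec (AllOdd p.2) (fun b₀ => MarkOdd b₀ p.2) p.1) (Equiv.Perm.decomposeOption σ) := by
    intro σ
    show AllOdd σ ↔ Option.rec (AllOdd (Equiv.removeNone σ))
      (fun b₀ => MarkOdd b₀ (Equiv.removeNone σ)) (σ none)
    cases h : σ none with
    | none => exact T1a h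
    | some b₀ => exact T1b h
  have eq1 : Nat.card {σ : Perm (Option α) // AllOdd σ}
      = Nat.card {p : Option α × Perm α //
          (Option.rec (AllOdd p.2) (fun b₀ => MarkOdd b₀ p.2) p.1 : Prop)} :=
    Nat.card_congr (Equiv.subtypeEquiv Equiv.Perm.decomposeOption key)
  rw [eq1, card_optionProd]

lemma step_Ahat :
    Nat.card {σ : Perm (Option α) // MarkOdd (none : Option α) σ}
      = Nat.card {p : α × Perm α // AllOdd p.2} := by
  have key : ∀ σ : Perm (Option α), MarkOdd (none : Option α) σ ↔
      (fun p : Option α × Perm α =>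
        Option.rec False (fun _ => AllOdd p.2) p.1) (Equiv.Perm.decomposeOption σ) := by
    intro σ
    show MarkOdd (none : Option α) σ ↔
      Option.rec False (fun _ => AllOdd (Equiv.removeNone σ)) (σ none)
    cases h : σ none with
    | none => exact iff_false_intro (T2_none h)
    | some b₀ => exact T2 h
  have eq1 : Nat.card {σ : Perm (Option α) // MarkOdd (none : Option α) σ}
      = Nat.card {p : Option α × Perm α //
          (Option.rec False (fun _ => AllOdd p.2) p.1 : Prop)} :=
    Nat.card_congr (Equiv.subtypeEquiv Equiv.Perm.decomposeOption key)
  rw [eq1, card_optionProd]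
  have : IsEmpty {c : Perm α // False} := ⟨fun x => x.2⟩
  rw [Nat.card_of_isEmpty, zero_add]

lemma step_B :
    Nat.card {σ : Perm (Option α) // AllEven σ}
      = Nat.card {p : α × Perm α // MarkEven p.1 p.2} := by
  have key : ∀ σ : Perm (Option α), AllEven σ ↔
      (fun p : Option α × Perm α =>
        Option.rec False (fun b₀ => MarkEven b₀ p.2) p.1) (Equiv.Perm.decomposeOption σ) := by
    intro σ
    show AllEven σ ↔
      Option.rec False (fun b₀ => MarkEven b₀ (Equiv.removeNone σ)) (σ none)
    cases h : σ none with
    | none => exact iff_false_intro (T3_none h)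
    | some b₀ => exact T3 h
  have eq1 : Nat.card {σ : Perm (Option α) // AllEven σ}
      = Nat.card {p : Option α × Perm α //
          (Option.rec False (fun b₀ => MarkEven b₀ p.2) p.1 : Prop)} :=
    Nat.card_congr (Equiv.subtypeEquiv Equiv.Perm.decomposeOption key)
  rw [eq1, card_optionProd]
  have : IsEmpty {c : Perm α // False} := ⟨fun x => x.2⟩
  rw [Nat.card_of_isEmpty, zero_add]

lemma step_Bhat :
    Nat.card {σ : Perm (Option α) // MarkEven (none : Option α) σ}
      = Nat.card {f : Perm α // AllEven f}
        + Nat.card {p : α × Perm α // AllEven p.2} := by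
  have key : ∀ σ : Perm (Option α), MarkEven (none : Option α) σ ↔
      (fun p : Option α × Perm α =>
        Option.rec (AllEven p.2) (fun _ => AllEven p.2) p.1) (Equiv.Perm.decomposeOption σ) := by
    intro σ
    show MarkEven (none : Option α) σ ↔
      Option.rec (AllEven (Equiv.removeNone σ)) (fun _ => AllEven (Equiv.removeNone σ)) (σ none)
    cases h : σ none with
    | none => exact T4a h
    | some b₀ => exact T4b h
  have eq1 : Nat.card {σ : Perm (Option α) // MarkEven (none : Option α) σ}
      = Nat.card {p : Option α × Perm α //
          (Option.rec (AllEven p.2) (fun _ => AllEven p.2) p.1 : Prop)} :=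
    Nat.card_congr (Equiv.subtypeEquiv Equiv.Perm.decomposeOption key)
  rw [eq1, card_optionProd]

end Counting

section Sequences

/-- Number of permutations of `Fin n` with all cycles of odd length. -/
noncomputable def an (n : ℕ) : ℕ := Nat.card {f : Perm (Fin n) // AllOdd f}

/-- Number of permutations of `Fin n` with all cycles of even length. -/
noncomputable def bn (n : ℕ) : ℕ := Nat.card {f : Perm (Fin n) // AllEven f}

lemma card_allOdd_congr {β γ : Type*} [Finite β] [Finite γ] (e : β ≃ γ) :
    Nat.card {f : Perm β // AllOdd f} = Nat.card {f : Perm γ // AllOdd f} :=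
  Nat.card_congr (Equiv.subtypeEquiv e.permCongr fun f => (allOdd_permCongr e f).symm)

lemma card_allEven_congr {β γ : Type*} [Finite β] [Finite γ] (e : β ≃ γ) :
    Nat.card {f : Perm β // AllEven f} = Nat.card {f : Perm γ // AllEven f} :=
  Nat.card_congr (Equiv.subtypeEquiv e.permCongr fun f => (allEven_permCongr e f).symm)

lemma card_markOdd_pairs_congr {β γ : Type*} [Finite β] [Finite γ] (e : β ≃ γ) :
    Nat.card {p : β × Perm β // MarkOdd p.1 p.2}
      = Nat.card {p : γ × Perm γ // MarkOdd p.1 p.2} :=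
  Nat.card_congr (Equiv.subtypeEquiv (e.prodCongr e.permCongr) fun p =>
    (markOdd_permCongr e p.1 p.2).symm)

lemma card_markEven_pairs_congr {β γ : Type*} [Finite β] [Finite γ] (e : β ≃ γ) :
    Nat.card {p : β × Perm β // MarkEven p.1 p.2}
      = Nat.card {p : γ × Perm γ // MarkEven p.1 p.2} :=
  Nat.card_congr (Equiv.subtypeEquiv (e.prodCongr e.permCongr) fun p =>
    (markEven_permCongr e p.1 p.2).symm)

lemma an_rec (n : ℕ) : an (n + 2) = an (n + 1) + (n + 1) * (n * an n) := by
  have h1 : an (n + 2) = Nat.card {σ : Perm (Option (Fin (n + 1))) // AllOdd σ} :=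
    card_allOdd_congr (finSuccEquiv (n + 1))
  have h2 : Nat.card {p : Fin (n + 1) × Perm (Fin (n + 1)) // MarkOdd p.1 p.2}
      = Nat.card {p : Option (Fin n) × Perm (Option (Fin n)) // MarkOdd p.1 p.2} :=
    card_markOdd_pairs_congr (finSuccEquiv n)
  have h3 := card_marked_pairs (β := Option (Fin n)) MarkOdd markOdd_conj none
  have h4 := step_Ahat (α := Fin n)
  have h5 := card_pairs_snd (α := Fin n) (fun f : Perm (Fin n) => AllOdd f)
  rw [h1, step_A, h2, h3, h4, h5]
  simp [an, Fintype.card_option]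

lemma bn_rec (n : ℕ) : bn (n + 2) = (n + 1) * ((n + 1) * bn n) := by
  have h1 : bn (n + 2) = Nat.card {σ : Perm (Option (Fin (n + 1))) // AllEven σ} :=
    card_allEven_congr (finSuccEquiv (n + 1))
  have h2 : Nat.card {p : Fin (n + 1) × Perm (Fin (n + 1)) // MarkEven p.1 p.2}
      = Nat.card {p : Option (Fin n) × Perm (Option (Fin n)) // MarkEven p.1 p.2} :=
    card_markEven_pairs_congr (finSuccEquiv n)
  have h3 := card_marked_pairs (β := Option (Fin n)) MarkEven markEven_conj none
  have h4 := step_Bhat (α := Fin n)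
  have h5 := card_pairs_snd (α := Fin n) (fun f : Perm (Fin n) => AllEven f)
  rw [h1, step_B, h2, h3, h4, h5]
  simp only [an, bn, Fintype.card_option, Fintype.card_fin]
  ring

end Sequences

section Base

lemma an_zero : an 0 = 1 := by
  rw [an, Nat.card_eq_one_iff_unique]
  exact ⟨inferInstance, ⟨⟨1, fun x => x.elim0⟩⟩⟩

lemma bn_zero : bn 0 = 1 := by
  rw [bn, Nat.card_eq_one_iff_unique]
  exact ⟨inferInstance, ⟨⟨1, fun x => x.elim0⟩⟩⟩

lemma allOdd_one_fin_one : AllOdd (1 : Perm (Fin 1)) := by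
  intro x
  have : ⇑(1 : Perm (Fin 1)) = id := rfl
  rw [this, minimalPeriod_id]
  exact odd_one

lemma an_one : an 1 = 1 := by
  rw [an, Nat.card_eq_one_iff_unique]
  refine ⟨?_, ⟨⟨1, allOdd_one_fin_one⟩⟩⟩
  constructor
  rintro ⟨f, _⟩ ⟨g, _⟩
  have : f = g := Subsingleton.elim f g
  simp [this]

lemma main_claim (k : ℕ) :
    an (2 * k) = bn (2 * k) ∧ an (2 * k + 1) = (2 * k + 1) * bn (2 * k) := by
  induction k with
  | zero =>
    simp only [Nat.mul_zero, Nat.zero_add]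
    rw [an_zero, bn_zero, an_one]
    omega
  | succ k ih =>
    obtain ⟨h1, h2⟩ := ih
    have e1 : 2 * (k + 1) = 2 * k + 2 := by ring
    have e2 : 2 * (k + 1) + 1 = (2 * k + 1) + 2 := by ring
    have ha2 := an_rec (2 * k)
    have ha3 := an_rec (2 * k + 1)
    have hb2 := bn_rec (2 * k)
    constructor
    · rw [e1, ha2, hb2, h2, h1]
      ring
    · rw [e2, ha3, e1, hb2, ha2, h2, h1]
      ring

end Base

section Bridge

variable {β : Type*} [Fintype β] [DecidableEq β] (σ : Perm β)

lemma minPeriod_eq_card_support_cycleOf {x : β} (hx : σ x ≠ x) :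
    minimalPeriod σ x = (σ.cycleOf x).support.card := by
  have hc : (σ.cycleOf x).IsCycle := Equiv.Perm.isCycle_cycleOf σ hx
  have h1 : minimalPeriod σ x = minimalPeriod (σ.cycleOf x) x := by
    refine minimalPeriod_eq_of_iff fun n => ?_
    rw [Equiv.Perm.cycleOf_pow_apply_self]
  have hcx : (σ.cycleOf x) x ≠ x := by
    rw [Equiv.Perm.cycleOf_apply_self]; exact hx
  have h2 : minimalPeriod (σ.cycleOf x) x = orderOf (σ.cycleOf x) := by
    apply le_antisymm
    · refine IsPeriodicPt.minimalPeriod_le (orderOf_pos _) ?_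
      rw [isPeriodicPt_iff_pow, pow_orderOf_eq_one]
      rfl
    · have hper : ((σ.cycleOf x) ^ minimalPeriod (σ.cycleOf x) x) x = x :=
        pow_minimalPeriod_apply _ _
      have : (σ.cycleOf x) ^ minimalPeriod (σ.cycleOf x) x = 1 :=
        (hc.pow_eq_one_iff' hcx).2 hper
      exact Nat.le_of_dvd (minimalPeriod_pos _ _) (orderOf_dvd_of_pow_eq_one this)
  rw [h1, h2, hc.orderOf]

lemma mem_cycleType_iff_exists {l : ℕ} :
    l ∈ σ.cycleType ↔ ∃ x, σ x ≠ x ∧ minimalPeriod σ x = l := by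
  rw [Equiv.Perm.cycleType_def, Multiset.mem_map]
  constructor
  · rintro ⟨c, hc, rfl⟩
    rw [← Finset.mem_def] at hc
    have hcyc : c.IsCycle := (Equiv.Perm.mem_cycleFactorsFinset_iff.1 hc).1
    obtain ⟨x, hx, -⟩ := hcyc
    have hxs : x ∈ c.support := Equiv.Perm.mem_support.2 hx
    have hcx : c = σ.cycleOf x := Equiv.Perm.cycle_is_cycleOf hxs hc
    have hsx : σ x ≠ x := by
      rw [← (Equiv.Perm.mem_cycleFactorsFinset_iff.1 hc).2 x hxs]
      exact hx
    exact ⟨x, hsx, by rw [minPeriod_eq_card_support_cycleOf σ hsx, ← hcx]; rfl⟩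
  · rintro ⟨x, hx, rfl⟩
    refine ⟨σ.cycleOf x, ?_, ?_⟩
    · rw [← Finset.mem_def]
      exact Equiv.Perm.cycleOf_mem_cycleFactorsFinset_iff.2 (Equiv.Perm.mem_support.2 hx)
    · rw [minPeriod_eq_card_support_cycleOf σ hx]
      rfl

lemma M2 : (∀ l ∈ σ.cycleType, Odd l) ↔ AllOdd σ := by
  constructor
  · intro h x
    by_cases hx : σ x = x
    · rw [minimalPeriod_eq_one_iff_isFixedPt.2 hx]
      exact odd_one
    · exact h _ ((mem_cycleType_iff_exists σ).2 ⟨x, hx, rfl⟩)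
  · intro h l hl
    obtain ⟨x, -, rfl⟩ := (mem_cycleType_iff_exists σ).1 hl
    exact h x

lemma M3 : ((∀ x, σ x ≠ x) ∧ ∀ l ∈ σ.cycleType, Even l) ↔ AllEven σ := by
  constructor
  · rintro ⟨hf, he⟩ x
    exact he _ ((mem_cycleType_iff_exists σ).2 ⟨x, hf x, rfl⟩)
  · intro h
    constructor
    · intro x hx
      have := h x
      rw [minimalPeriod_eq_one_iff_isFixedPt.2 hx] at this
      exact (Nat.not_even_iff_odd.2 odd_one) this
    · intro l hl
      obtain ⟨x, -, rfl⟩ := (mem_cycleType_iff_exists σ).1 hl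
      exact h x

end Bridge

end CardOdd

theorem card_oddCycles_odd_eq_mul (n : ℕ) (hn : 0 < n) (hno : Odd n) :
    Nat.card {σ : Equiv.Perm (Fin n) // ∀ l ∈ σ.cycleType, Odd l} =
      n * Nat.card {σ : Equiv.Perm (Fin (n - 1)) //
        (∀ x, σ x ≠ x) ∧ ∀ l ∈ σ.cycleType, Even l} := by
  obtain ⟨k, rfl⟩ := hno
  have hL : Nat.card {σ : Equiv.Perm (Fin (2 * k + 1)) // ∀ l ∈ σ.cycleType, Odd l}
      = CardOdd.an (2 * k + 1) :=
    Nat.card_congr (Equiv.subtypeEquivRight fun σ => CardOdd.M2 σ)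
  have hsub : 2 * k + 1 - 1 = 2 * k := by omega
  have hR : Nat.card {σ : Equiv.Perm (Fin (2 * k + 1 - 1)) //
      (∀ x, σ x ≠ x) ∧ ∀ l ∈ σ.cycleType, Even l} = CardOdd.bn (2 * k) := by
    rw [hsub]
    exact Nat.card_congr (Equiv.subtypeEquivRight fun σ => CardOdd.M3 σ)
  rw [hL, hR, (CardOdd.main_claim k).2]
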